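/- Let n ≥ 2, a > 0, and let c be the uniform-node matrix c_{ij} = 1/(n−1) for i ≠ j and c_{ii} = 0. If real numbers ρ¹,…,ρⁿ, q¹,…,qⁿ, γ¹,…,γⁿ satisfy, for every i, (1/2)qⁱ + (1/4)ρⁱ + (a/4)γⁱ = ∑_{j=1}^n c_{ij} (−(1/2)qʲ + (1/4)ρʲ + (a/4)γʲ), then for all i, j one has ρⁱ + (2(n−2)/n)·qⁱ + a·γⁱ = ρʲ + (2(n−2)/n)·qʲ + a·γʲ. -/

import Mathlib

/-- Half-moment flux coupling at a uniform node: invariance of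
ρ + (2(n−2)/n)·q + a·γ across edges. -/
theorem halfmoment_coupling_uniform_invariant (n : ℕ) (hn : 2 ≤ n) (a : ℝ) (ha : 0 < a)
    (c : Fin n → Fin n → ℝ)
    (hc : ∀ i j, c i j = if i = j then 0 else 1 / ((n : ℝ) - 1))
    (ρ q γ : Fin n → ℝ)
    (h : ∀ i, (1 / 2) * q i + (1 / 4) * ρ i + (a / 4) * γ i =
      ∑ j, c i j * (-(1 / 2) * q j + (1 / 4) * ρ j + (a / 4) * γ j)) :
    ∀ i j, ρ i + (2 * ((n : ℝ) - 2) / n) * q i + a * γ i =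
           ρ j + (2 * ((n : ℝ) - 2) / n) * q j + a * γ j := by
  have h2 : (2:ℝ) ≤ (n:ℝ) := by exact_mod_cast hn
  set F : Fin n → ℝ := fun j => -(1 / 2) * q j + (1 / 4) * ρ j + (a / 4) * γ j with hF
  set S : ℝ := ∑ j, F j with hS
  have hsum : ∀ i, ∑ j, c i j * F j = (1 / ((n:ℝ) - 1)) * (S - F i) := by
    intro i
    calc ∑ j, c i j * F j
        = ∑ j, ((1 / ((n:ℝ) - 1)) * F j - (if i = j then (1 / ((n:ℝ) - 1)) * F j else 0)) := by
          refine Finset.sum_congr rfl fun j _ => by rw [hc]; split <;> ring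
      _ = (∑ j, (1 / ((n:ℝ) - 1)) * F j) - ∑ j, (if i = j then (1 / ((n:ℝ) - 1)) * F j else 0) :=
          Finset.sum_sub_distrib _ _
      _ = (1 / ((n:ℝ) - 1)) * (S - F i) := by
          rw [Finset.sum_ite_eq, ← Finset.mul_sum]
          simp [hS]
          ring
  have key : ∀ i, ρ i + (2 * ((n:ℝ) - 2) / n) * q i + a * γ i = 4 * S / n := by
    intro i
    have e : (1 / 2) * q i + (1 / 4) * ρ i + (a / 4) * γ i = (1 / ((n:ℝ) - 1)) * (S - F i) := by
      rw [h i, hsum i]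
    have hn1 : (n:ℝ) - 1 ≠ 0 := by intro h0; linarith
    have e2 : ((n:ℝ) - 1) * ((1 / 2) * q i + (1 / 4) * ρ i + (a / 4) * γ i)
        = S - (-(1 / 2) * q i + (1 / 4) * ρ i + (a / 4) * γ i) := by
      rw [e]; simp only [hF]; field_simp
    have hn0 : (n:ℝ) ≠ 0 := by intro h0; linarith
    field_simp
    linear_combination 4 * e2
  intro i j
  rw [key i, key j]
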